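/- Let (X, d_X) be an n-point metric space and Δ > 0. Define an equivalence relation on X by x ∼ y if there exist points x = x_0, x_1, ..., x_k = y in X with d_X(x_{i-1}, x_i) ≤ Δ/(2n) for all i. Let W be the set of equivalence classes, π : X → W the quotient map, and let d_{X/W} be the quotient metric on W, i.e. the maximal (pseudo)metric on W majorized by d_X: d_{X/W}(W,W') = min over finite chains V_0, ..., V_{m-1} ∈ W with V_0 = W, V_{m-1} = W' of Σ_{j=1}^{m-1} d_X(V_{j-1}, V_j), where d_X(V,V') = min{d_X(a,b) : a ∈ V, b ∈ V'}. Then for every x, y ∈ X: d_X(x,y) − Δ/2 ≤ d_{X/W}(π(x), π(y)) ≤ d_X(x,y). -/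

import Mathlib

/-- `d` is a metric on `X`. -/
def IsMetric {X : Type*} (d : X → X → ℝ) : Prop :=
  (∀ x y, 0 ≤ d x y) ∧ (∀ x y, d x y = 0 ↔ x = y) ∧
  (∀ x y, d x y = d y x) ∧ (∀ x y z, d x z ≤ d x y + d y z)

/-- The equivalence relation `x ∼ y`: there is a chain from `x` to `y` whose consecutive
steps all have length at most `ε`. -/
def ChainRel {X : Type*} (d : X → X → ℝ) (ε : ℝ) : X → X → Prop :=
  Relation.ReflTransGen (fun a b => d a b ≤ ε)

/-- The set of sums realizing the quotient distance between the classes of `x` and `y`: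
sums `∑ d(uᵢ, vᵢ)` over chains where `x ∼ u₀`, `vₖ ∼ y` and `vᵢ ∼ uᵢ₊₁` (moves within an
equivalence class are free, jumps between classes cost their distance). -/
def quotChainSums {X : Type*} (d : X → X → ℝ) (ε : ℝ) (x y : X) : Set ℝ :=
  { s : ℝ | ∃ (k : ℕ) (u v : Fin (k + 1) → X),
      ChainRel d ε x (u 0) ∧ ChainRel d ε (v (Fin.last k)) y ∧
      (∀ i : Fin k, ChainRel d ε (v i.castSucc) (u i.succ)) ∧
      s = ∑ i, d (u i) (v i) }

set_option maxHeartbeats 1000000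


lemma teleAux {X : Type} (d : X → X → ℝ) (hd : (∀ x y z, d x z ≤ d x y + d y z)) :
    ∀ (k : ℕ) (u v : Fin (k+1) → X) (x y : X),
    d x y ≤ d x (u 0) + (∑ i, d (u i) (v i)) +
      (∑ i : Fin k, d (v i.castSucc) (u i.succ)) + d (v (Fin.last k)) y := by
  intro k
  induction k with
  | zero =>
      intro u v x y
      have hs : (∑ i : Fin (0+1), d (u i) (v i)) = d (u 0) (v 0) := by simp
      have hs0 : (∑ i : Fin 0, d (v i.castSucc) (u i.succ)) = 0 := by simp
      have hl : (Fin.last 0 : Fin 1) = 0 := rfl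
      rw [hs, hs0, hl]
      have h1 := hd x (u 0) y
      have h2 := hd (u 0) (v 0) y
      linarith
  | succ k ih =>
      intro u v x y
      have key := ih (fun i => u i.succ) (fun i => v i.succ) (v 0) y
      beta_reduce at key
      have hcs : ∀ i : Fin k, ((i.castSucc : Fin (k+1)).succ : Fin (k+2)) =
          ((i.succ : Fin (k+1)).castSucc : Fin (k+2)) := by
        intro i; ext; simp
      rw [Fin.succ_last] at key
      have key2 : (∑ i : Fin k, d (v (i.castSucc : Fin (k+1)).succ) (u (i.succ : Fin (k+1)).succ))
          = ∑ i : Fin k, d (v ((i.succ : Fin (k+1)).castSucc)) (u ((i.succ : Fin (k+1)).succ)) := by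
        apply Finset.sum_congr rfl; intro i _; rw [hcs i]
      rw [key2] at key
      have hsum : (∑ i, d (u i) (v i)) =
          d (u 0) (v 0) + ∑ i : Fin (k+1), d (u i.succ) (v i.succ) :=
        Fin.sum_univ_succ _
      have hslack : (∑ i : Fin (k+1), d (v i.castSucc) (u i.succ)) =
          d (v (0 : Fin (k+1)).castSucc) (u (0 : Fin (k+1)).succ) +
          ∑ i : Fin k, d (v ((i.succ : Fin (k+1)).castSucc)) (u ((i.succ : Fin (k+1)).succ)) :=
        Fin.sum_univ_succ _
      have hc0 : ((0 : Fin (k+1)).castSucc : Fin (k+2)) = 0 := rfl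
      rw [hc0] at hslack
      have h1 := hd x (u 0) (v 0)
      have h2 := hd x (v 0) y
      rw [hsum, hslack]
      linarith


namespace QMC

set_option linter.unusedSectionVars false
set_option linter.unnecessarySeqFocus false

set_option linter.unusedSectionVars false

variable {X : Type} [Fintype X] (d : X → X → ℝ) (ε : ℝ)

lemma crel_symm (hd : IsMetric d) {a b : X} (h : ChainRel d ε a b) : ChainRel d ε b a := by
  induction h with
  | refl => exact .refl
  | tail _ hbc ih =>
      exact Relation.ReflTransGen.trans
        (Relation.ReflTransGen.single (by rw [hd.2.2.1]; exact hbc)) ih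

def Gr (hd : IsMetric d) : SimpleGraph X where
  Adj a b := a ≠ b ∧ d a b ≤ ε
  symm := by
    constructor
    intro a b h
    exact ⟨h.1.symm, by rw [hd.2.2.1]; exact h.2⟩
  loopless := ⟨fun a h => h.1 rfl⟩

lemma crel_reachable (hd : IsMetric d) {a b : X} (h : ChainRel d ε a b) :
    (Gr d ε hd).Reachable a b := by
  induction h with
  | refl => exact SimpleGraph.Reachable.refl a
  | tail _ hbc ih =>
      rename_i b' c _
      by_cases hbc' : b' = c
      · exact hbc' ▸ ih
      · exact ih.trans (SimpleGraph.Adj.reachable ⟨hbc', hbc⟩)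

lemma crel_of_walk (hd : IsMetric d) {a b : X} (w : (Gr d ε hd).Walk a b) :
    ChainRel d ε a b := by
  induction w with
  | nil => exact .refl
  | cons h _ ih => exact Relation.ReflTransGen.head h.2 ih

lemma walk_dist (hd : IsMetric d) (hε : 0 ≤ ε) {a b : X} (w : (Gr d ε hd).Walk a b) :
    d a b ≤ w.length * ε := by
  induction w with
  | nil =>
      rename_i a'
      simp [(hd.2.1 a' a').mpr rfl]
  | cons h p ih =>
      rename_i a' b' c'
      calc d a' c' ≤ d a' b' + d b' c' := hd.2.2.2 a' b' c'
      _ ≤ ε + p.length * ε := add_le_add h.2 ih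
      _ = (p.cons h).length * ε := by
          rw [SimpleGraph.Walk.length_cons]; push_cast; ring

open Classical in
noncomputable def classF (a : X) : Finset X :=
  Finset.univ.filter (fun z => ChainRel d ε a z)

lemma mem_classF {a z : X} : z ∈ classF d ε a ↔ ChainRel d ε a z := by
  classical
  simp [classF]

lemma classF_eq (hd : IsMetric d) {a b : X} (h : ChainRel d ε a b) :
    classF d ε a = classF d ε b := by
  ext z
  rw [mem_classF, mem_classF]
  exact ⟨fun hz => (crel_symm d ε hd h).trans hz, fun hz => h.trans hz⟩

lemma crel_dist (hd : IsMetric d) (hε : 0 ≤ ε) {a b : X} (h : ChainRel d ε a b) :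
    d a b ≤ (((classF d ε a).card - 1 : ℕ) : ℝ) * ε := by
  classical
  obtain ⟨w⟩ := crel_reachable d ε hd h
  let p := w.toPath
  have hsup : ∀ z ∈ p.1.support, ChainRel d ε a z := by
    intro z hz
    exact crel_of_walk d ε hd (p.1.takeUntil z hz)
  have hsub : p.1.support.toFinset ⊆ classF d ε a := by
    intro z hz
    rw [List.mem_toFinset] at hz
    exact (mem_classF d ε).mpr (hsup z hz)
  have hnd : p.1.support.Nodup := p.2.support_nodup
  have hcard : p.1.length + 1 ≤ (classF d ε a).card := by
    have h1 := Finset.card_le_card hsub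
    rw [List.toFinset_card_of_nodup hnd, SimpleGraph.Walk.length_support] at h1
    exact h1
  have hlen : p.1.length ≤ (classF d ε a).card - 1 := by omega
  calc d a b ≤ p.1.length * ε := walk_dist d ε hd hε p.1
  _ ≤ (((classF d ε a).card - 1 : ℕ) : ℝ) * ε := by
      apply mul_le_mul_of_nonneg_right _ hε
      exact_mod_cast hlen

lemma tele (hd : IsMetric d) :
    ∀ (k : ℕ) (u v : Fin (k+1) → X) (x y : X),
    d x y ≤ d x (u 0) + (∑ i, d (u i) (v i)) +
      (∑ i : Fin k, d (v i.castSucc) (u i.succ)) + d (v (Fin.last k)) y :=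
  teleAux d hd.2.2.2

lemma lower (hd : IsMetric d) (hε : 0 ≤ ε) (n : ℕ) (hn : Fintype.card X = n) :
    ∀ (k : ℕ) (u v : Fin (k+1) → X) (x y : X),
      ChainRel d ε x (u 0) → ChainRel d ε (v (Fin.last k)) y →
      (∀ i : Fin k, ChainRel d ε (v i.castSucc) (u i.succ)) →
      d x y ≤ (∑ i, d (u i) (v i)) + n * ε := by
  intro k
  induction k using Nat.strong_induction_on with
  | _ k IH =>
  intro u v x y h1 h2 h3
  classical
  set p : Fin (k+2) → X :=
    fun t => if h : t.val < k+1 then u ⟨t.val, h⟩ else v (Fin.last k) with hp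
  have hp0 : p 0 = u 0 := by simp [hp]
  have hplast : p (Fin.last (k+1)) = v (Fin.last k) := by simp [hp]
  have hpmid : ∀ (t : ℕ) (h : t < k+1) (h2 : t < k+2), p ⟨t, h2⟩ = u ⟨t, h⟩ := by
    intro t h h2; simp [hp, h, show t ≤ k by omega]
  by_cases hinj : Function.Injective (fun t : Fin (k+2) => classF d ε (p t))
  · -- all classes distinct
    set c : Fin (k+2) → Finset X := fun t => classF d ε (p t) with hc
    set g : Fin (k+2) → ℝ := fun t => (((c t).card - 1 : ℕ) : ℝ) * ε with hg
    have hdisj : ∀ t1 ∈ (Finset.univ : Finset (Fin (k+2))), ∀ t2 ∈ Finset.univ,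
        t1 ≠ t2 → Disjoint (c t1) (c t2) := by
      intro t1 _ t2 _ hne
      rw [Finset.disjoint_left]
      intro z hz1 hz2
      have hz1' := (mem_classF d ε).mp hz1
      have hz2' := (mem_classF d ε).mp hz2
      have : ChainRel d ε (p t1) (p t2) := hz1'.trans (crel_symm d ε hd hz2')
      exact hne (hinj (classF_eq d ε hd this))
    have hsumcard : (∑ t : Fin (k+2), (c t).card) ≤ n := by
      rw [← Finset.card_biUnion hdisj]
      calc (Finset.univ.biUnion c).card ≤ Finset.univ.card := Finset.card_le_univ _
      _ = n := hn
    have hA : d x (u 0) ≤ g 0 := by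
      have := crel_dist d ε hd hε h1
      have hx : classF d ε x = c 0 := by
        show classF d ε x = classF d ε (p 0)
        rw [hp0]; exact classF_eq d ε hd h1
      rw [hx] at this; exact this
    have hB : ∀ i : Fin k, d (v i.castSucc) (u i.succ) ≤ g ((i.castSucc).succ) := by
      intro i
      have := crel_dist d ε hd hε (h3 i)
      have hx : classF d ε (v i.castSucc) = c ((i.castSucc).succ) := by
        show classF d ε (v i.castSucc) = classF d ε (p ((i.castSucc).succ))
        have e1 : ((i.castSucc).succ : Fin (k+2)) = ⟨i.val + 1, by omega⟩ := by
          apply Fin.ext; simp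
        have e2 : (⟨i.val + 1, by omega⟩ : Fin (k+1)) = i.succ := by
          apply Fin.ext; simp
        rw [e1, hpmid (i.val + 1) (by omega) (by omega), e2]
        exact classF_eq d ε hd (h3 i)
      rw [hx] at this; exact this
    have hC : d (v (Fin.last k)) y ≤ g (Fin.last (k+1)) := by
      have := crel_dist d ε hd hε h2
      have hx : classF d ε (v (Fin.last k)) = c (Fin.last (k+1)) := by
        show classF d ε (v (Fin.last k)) = classF d ε (p (Fin.last (k+1)))
        rw [hplast]
      rw [hx] at this; exact this
    have hdecomp : (∑ t : Fin (k+2), g t) =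
        g 0 + ((∑ i : Fin k, g ((i.castSucc).succ)) + g (Fin.last (k+1))) := by
      rw [Fin.sum_univ_succ g]
      congr 1
      rw [Fin.sum_univ_castSucc (fun i : Fin (k+1) => g i.succ)]
      rw [Fin.succ_last]
    have hgn : (∑ t : Fin (k+2), g t) ≤ n * ε := by
      have : (∑ t : Fin (k+2), g t) =
          ((∑ t : Fin (k+2), ((c t).card - 1) : ℕ) : ℝ) * ε := by
        rw [hg]; push_cast; rw [Finset.sum_mul]
      rw [this]
      apply mul_le_mul_of_nonneg_right _ hε
      have hle : (∑ t : Fin (k+2), ((c t).card - 1)) ≤ n :=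
        le_trans (Finset.sum_le_sum (fun t _ => Nat.sub_le _ _)) hsumcard
      exact_mod_cast hle
    have ht := tele d hd k u v x y
    have hBsum : (∑ i : Fin k, d (v i.castSucc) (u i.succ)) ≤
        ∑ i : Fin k, g ((i.castSucc).succ) :=
      Finset.sum_le_sum (fun i _ => hB i)
    linarith
  · -- repeated class: shorten the chain
    rw [Function.not_injective_iff] at hinj
    obtain ⟨t1, t2, hceq, hne⟩ := hinj
    obtain ⟨ti, tj, hlt, hceq2⟩ : ∃ ti tj : Fin (k+2), ti.val < tj.val ∧
        classF d ε (p ti) = classF d ε (p tj) := by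
      rcases Nat.lt_or_ge t1.val t2.val with h | h
      · exact ⟨t1, t2, h, hceq⟩
      · have : t2.val < t1.val := by
          rcases Nat.lt_or_ge t2.val t1.val with h' | h'
          · exact h'
          · exact absurd (Fin.ext (le_antisymm h' h)) hne
        exact ⟨t2, t1, this, hceq.symm⟩
    set i := ti.val with hi
    set j := tj.val with hj
    have hjk : j < k + 2 := tj.isLt
    have hcr : ChainRel d ε (p ti) (p tj) := by
      have hm : p tj ∈ classF d ε (p tj) := (mem_classF d ε).mpr Relation.ReflTransGen.refl
      rw [← hceq2] at hm
      exact (mem_classF d ε).mp hm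
    by_cases hcase : i = 0 ∧ j = k + 1
    · -- whole chain collapses: x and y in same class
      have hpti : p ti = u 0 := by
        have : ti = 0 := Fin.ext hcase.1
        rw [this, hp0]
      have hptj : p tj = v (Fin.last k) := by
        have : tj = Fin.last (k+1) := Fin.ext hcase.2
        rw [this, hplast]
      have hxy : ChainRel d ε x y := by
        refine h1.trans ?_
        rw [← hpti]
        exact hcr.trans (by rw [hptj]; exact h2)
      have hdxy := crel_dist d ε hd hε hxy
      have hcard : (classF d ε x).card ≤ n := by
        calc (classF d ε x).card ≤ Finset.univ.card := Finset.card_le_univ _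
        _ = n := hn
      have h1' : (((classF d ε x).card - 1 : ℕ) : ℝ) * ε ≤ n * ε := by
        apply mul_le_mul_of_nonneg_right _ hε
        have : (classF d ε x).card - 1 ≤ n := by omega
        exact_mod_cast this
      have hS : (0:ℝ) ≤ ∑ t : Fin (k+1), d (u t) (v t) :=
        Finset.sum_nonneg (fun t _ => hd.1 _ _)
      linarith
    · -- proper shortening
      have hmain : ¬(i = 0 ∧ j = k+1) := hcase
      set m := i + (k + 1 - j) with hm
      have hm1 : 1 ≤ m := by omega
      have hmk : m ≤ k := by omega
      set k' := m - 1 with hk'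
      have hk'm : k' + 1 = m := by omega
      have hk'lt : k' < k := by omega
      have hbound : ∀ t : Fin (k'+1),
          (if t.val < i then t.val else j + (t.val - i)) < k + 1 := by
        intro t; have := t.isLt; split <;> omega
      set ι : Fin (k'+1) → Fin (k+1) :=
        fun t => ⟨if t.val < i then t.val else j + (t.val - i), hbound t⟩ with hι
      have hιval : ∀ t : Fin (k'+1),
          (ι t).val = if t.val < i then t.val else j + (t.val - i) := fun t => rfl
      have hιinj : Function.Injective ι := by
        intro s t hst
        have := congrArg Fin.val hst
        rw [hιval, hιval] at this
        apply Fin.ext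
        split_ifs at this <;> omega
      -- chain from class-equality: u ⟨i⟩ related to p tj
      have hpi : p ti = u ⟨i, by omega⟩ := hpmid i (by omega) ti.isLt
      have h1' : ChainRel d ε x (u (ι 0)) := by
        by_cases h0 : 0 < i
        · have : ι 0 = 0 := by apply Fin.ext; rw [hιval]; simp [h0]
          rw [this]; exact h1
        · have hi0 : i = 0 := by omega
          have hjk' : j < k + 1 := by omega
          have : ι 0 = ⟨j, hjk'⟩ := by
            apply Fin.ext
            rw [hιval]
            simp [hi0]
          rw [this]
          have hpj : p tj = u ⟨j, hjk'⟩ := hpmid j hjk' tj.isLt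
          have : ChainRel d ε (u 0) (u ⟨j, hjk'⟩) := by
            have hpti0 : p ti = u 0 := by
              rw [hpi]; congr 1; apply Fin.ext; simp [hi0]
            rw [← hpj, ← hpti0]; exact hcr
          exact h1.trans this
      have h2' : ChainRel d ε (v (ι (Fin.last k'))) y := by
        by_cases hjle : j ≤ k
        · have : ι (Fin.last k') = Fin.last k := by
            apply Fin.ext; rw [hιval]
            simp only [Fin.val_last]
            have : ¬ (k' < i) := by omega
            rw [if_neg this]
            omega
          rw [this]; exact h2
        · have hjeq : j = k + 1 := by omega
          have hi1 : 1 ≤ i := by omega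
          have him : k' = i - 1 := by omega
          have hik : i - 1 < k := by omega
          have : ι (Fin.last k') = ⟨i - 1, by omega⟩ := by
            apply Fin.ext
            simp only [hιval, Fin.val_last]
            split_ifs <;> omega
          rw [this]
          have hstep := h3 ⟨i - 1, hik⟩
          have hcs : (⟨i-1, hik⟩ : Fin k).castSucc = (⟨i-1, by omega⟩ : Fin (k+1)) := by
            apply Fin.ext; simp only [Fin.coe_castSucc]
          have hsc : (⟨i-1, hik⟩ : Fin k).succ = (⟨i, by omega⟩ : Fin (k+1)) := by
            apply Fin.ext; simp only [Fin.val_succ]; omega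
          rw [hcs, hsc] at hstep
          refine hstep.trans ?_
          have hptj : p tj = v (Fin.last k) := by
            have : tj = Fin.last (k+1) := Fin.ext hjeq
            rw [this, hplast]
          rw [← hpi]
          exact hcr.trans (by rw [hptj]; exact h2)
      have h3' : ∀ t : Fin k', ChainRel d ε (v (ι t.castSucc)) (u (ι t.succ)) := by
        intro t
        set a := t.val with ha
        have hak : a < k' := t.isLt
        by_cases hc1 : a + 1 < i
        · have e1 : ι t.castSucc = (⟨a, by omega⟩ : Fin k).castSucc := by
            apply Fin.ext
            simp only [hιval, Fin.coe_castSucc, Fin.val_succ]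
            split_ifs <;> omega
          have e2 : ι t.succ = (⟨a, by omega⟩ : Fin k).succ := by
            apply Fin.ext
            simp only [hιval, Fin.coe_castSucc, Fin.val_succ]
            split_ifs <;> omega
          rw [e1, e2]; exact h3 _
        · by_cases hc2 : a + 1 = i
          · -- seam: v ⟨i-1⟩ ~ u ⟨i⟩ ~ u ⟨j⟩
            have hjk2 : j < k + 1 := by omega
            have e1 : ι t.castSucc = (⟨a, by omega⟩ : Fin k).castSucc := by
              apply Fin.ext
              simp only [hιval, Fin.coe_castSucc, Fin.val_succ]
              split_ifs <;> omega
            have e2 : ι t.succ = ⟨j, hjk2⟩ := by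
              apply Fin.ext
              simp only [hιval, Fin.coe_castSucc, Fin.val_succ]
              split_ifs <;> omega
            rw [e1, e2]
            have hstep := h3 ⟨a, by omega⟩
            have hsc : (⟨a, (by omega : a < k)⟩ : Fin k).succ = (⟨i, by omega⟩ : Fin (k+1)) := by
              apply Fin.ext; simp only [Fin.val_succ]; omega
            rw [hsc] at hstep
            refine hstep.trans ?_
            have hpj : p tj = u ⟨j, hjk2⟩ := hpmid j hjk2 tj.isLt
            rw [← hpj, ← hpi]; exact hcr
          · -- inside the tail: consecutive
            have hai : i ≤ a := by omega
            have hq : j + (a - i) < k := by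
              have h' := (ι t.succ).isLt
              rw [hιval] at h'
              simp only [Fin.val_succ] at h'
              rw [if_neg (by omega)] at h'
              omega
            have e1 : ι t.castSucc = (⟨j + (a - i), hq⟩ : Fin k).castSucc := by
              apply Fin.ext
              simp only [hιval, Fin.coe_castSucc, Fin.val_succ]
              split_ifs <;> omega
            have e2 : ι t.succ = (⟨j + (a - i), hq⟩ : Fin k).succ := by
              apply Fin.ext
              simp only [hιval, Fin.coe_castSucc, Fin.val_succ]
              split_ifs <;> omega
            rw [e1, e2]; exact h3 _
      have hIH := IH k' hk'lt (fun t => u (ι t)) (fun t => v (ι t)) x y h1' h2' h3'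
      have hS : (∑ t : Fin (k'+1), d (u (ι t)) (v (ι t))) ≤
          ∑ t : Fin (k+1), d (u t) (v t) := by
        have himg := Finset.sum_image (s := (Finset.univ : Finset (Fin (k'+1))))
          (f := fun q : Fin (k+1) => d (u q) (v q)) (g := ι)
          (fun a _ b _ h => hιinj h)
        have himg' : (∑ t : Fin (k'+1), d (u (ι t)) (v (ι t))) =
            ∑ q ∈ Finset.univ.image ι, d (u q) (v q) := himg.symm
        rw [himg']
        exact Finset.sum_le_sum_of_subset_of_nonneg (Finset.subset_univ _)
          (fun q _ _ => hd.1 _ _)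
      beta_reduce at hIH
      linarith

end QMC

/-- For the quotient of an `n`-point metric space by the equivalence relation generated by
pairs at distance at most `Δ/(2n)`, the quotient metric satisfies
`d(x,y) − Δ/2 ≤ d_{X/W}(π x, π y) ≤ d(x,y)`. -/
theorem quotient_metric_comparison
    (X : Type) [Fintype X] (d : X → X → ℝ) (hd : IsMetric d)
    (n : ℕ) (hn : Fintype.card X = n) (Δ : ℝ) (hΔ : 0 < Δ) :
    ∀ x y : X,
      d x y - Δ / 2 ≤ sInf (quotChainSums d (Δ / (2 * n)) x y) ∧
      sInf (quotChainSums d (Δ / (2 * n)) x y) ≤ d x y := by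
  intro x y
  have hne : Nonempty X := ⟨x⟩
  have hn1 : 1 ≤ n := by rw [← hn]; exact Fintype.card_pos
  set ε := Δ / (2 * (n : ℝ)) with hε'
  have hnR : (0:ℝ) < n := by exact_mod_cast hn1
  have hε : 0 < ε := div_pos hΔ (by positivity)
  have hhalf : (n : ℝ) * ε = Δ / 2 := by
    rw [hε']; field_simp
  have hmem : d x y ∈ quotChainSums d ε x y :=
    ⟨0, fun _ => x, fun _ => y, Relation.ReflTransGen.refl,
      Relation.ReflTransGen.refl, fun i => i.elim0, by simp⟩
  have hbdd : BddBelow (quotChainSums d ε x y) := by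
    refine ⟨0, ?_⟩
    rintro s ⟨k, u, v, _, _, _, rfl⟩
    exact Finset.sum_nonneg fun i _ => hd.1 _ _
  constructor
  · apply le_csInf ⟨_, hmem⟩
    rintro s ⟨k, u, v, h1, h2, h3, rfl⟩
    have := QMC.lower d ε hd hε.le n hn k u v x y h1 h2 h3
    linarith
  · exact csInf_le hbdd hmem
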